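/- arXiv:1309.3551 — 2 statements merged into one kernel-verified Lean document; each statement's English description precedes it below -/
import Mathlib

section
/- The number of combinatorially distinct trivalent trees with m ≥ 3 labelled external legs equals (2m − 5)!!, the double factorial of 2m − 5. -/
/-- A trivalent tree with `m` labelled leaves: a tree on the vertex set
`Fin m ⊕ Fin (m - 2)` (leaves `Sum.inl i`, internal vertices `Sum.inr j`)
in which every leaf has degree `1` and every internal vertex has degree `3`. -/
def IsTrivalentLeafTree (m : ℕ) (G : SimpleGraph (Fin m ⊕ Fin (m - 2))) : Prop :=
  G.IsTree ∧ (∀ i : Fin m, (G.neighborSet (Sum.inl i)).ncard = 1) ∧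
    (∀ j : Fin (m - 2), (G.neighborSet (Sum.inr j)).ncard = 3)

/-- Two trivalent leaf-labelled trees are combinatorially equivalent if there is a
graph isomorphism between them fixing each labelled leaf. -/
def LeafLabelledIso (m : ℕ) (G H : {G : SimpleGraph (Fin m ⊕ Fin (m - 2)) //
    IsTrivalentLeafTree m G}) : Prop :=
  ∃ e : G.1 ≃g H.1, ∀ i : Fin m, e (Sum.inl i) = Sum.inl i

open SimpleGraph Sum


section TreeCriterion
variable {V : Type*} [Fintype V] {G : SimpleGraph V}

omit [Fintype V] in
lemma reachable_push {W : Type*} {H : SimpleGraph W} (f : V → W)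
    (h : ∀ a b, G.Adj a b → H.Reachable (f a) (f b)) {u v : V} (huv : G.Reachable u v) :
    H.Reachable (f u) (f v) := by
  obtain ⟨p⟩ := huv
  induction p with
  | nil => exact Reachable.refl _
  | cons ha _ ih => exact (h _ _ ha).trans ih

lemma tree_ncard_edge (hG : G.IsTree) : G.edgeSet.ncard + 1 = Fintype.card V := by
  classical
  have h := hG.card_edgeFinset
  rwa [← Set.ncard_coe_finset (G.edgeFinset), coe_edgeFinset] at h

lemma delete_edge_of_cycle (hc : G.Connected) (hac : ¬ G.IsAcyclic) :
    ∃ e ∈ G.edgeSet, (G \ fromEdgeSet {e}).Connected ∧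
      (G \ fromEdgeSet {e}).edgeSet = G.edgeSet \ {e} := by
  simp only [IsAcyclic, not_forall, not_not] at hac
  obtain ⟨v, c, hcyc⟩ := hac
  have hne : c.edges ≠ [] := by
    intro h
    have := hcyc.ne_nil
    cases c with
    | nil => exact this rfl
    | cons h' p => simp [Walk.edges_cons] at h
  obtain ⟨e, he⟩ := List.exists_mem_of_ne_nil _ hne
  refine ⟨e, c.edges_subset_edgeSet he, ?_, ?_⟩
  · induction e with
    | h a b =>
      have hadj : G.Adj a b := c.adj_of_mem_edges he
      have hreach : (G \ fromEdgeSet {s(a, b)}).Reachable a b :=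
        (adj_and_reachable_delete_edges_iff_exists_cycle.2 ⟨v, c, hcyc, he⟩).2
      have hnev := hc.nonempty
      refine Connected.mk fun x y => ?_
      refine reachable_push (G := G) id ?_ (hc.preconnected x y)
      intro p q hpq
      by_cases hpq' : s(p, q) = s(a, b)
      · rw [Sym2.eq_iff] at hpq'
        rcases hpq' with ⟨rfl, rfl⟩ | ⟨rfl, rfl⟩
        · exact hreach
        · exact hreach.symm
      · exact Adj.reachable (by simp [hpq, hpq'])
  · simp [edgeSet_sdiff, edgeSet_fromEdgeSet, edgeSet_sdiff_sdiff_isDiag]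

lemma card_le_of_connected : ∀ (n : ℕ) (G : SimpleGraph V), G.edgeSet.ncard = n →
    G.Connected → Fintype.card V ≤ n + 1 := by
  intro n
  induction n using Nat.strong_induction_on with
  | _ n IH =>
  intro G hn hc
  by_cases hac : G.IsAcyclic
  · have := tree_ncard_edge ⟨hc, hac⟩
    omega
  · obtain ⟨e, heG, hconn, hset⟩ := delete_edge_of_cycle hc hac
    have hfin : G.edgeSet.Finite := Set.toFinite _
    have hlt : (G.edgeSet \ {e}).ncard + 1 = n := by
      rw [← hn]; exact Set.ncard_diff_singleton_add_one heG hfin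
    have hle := IH ((G.edgeSet \ {e}).ncard) (by omega)
      (G \ fromEdgeSet {e}) (by rw [hset]) hconn
    omega

lemma isTree_of_connected_of_ncard (hc : G.Connected)
    (hn : G.edgeSet.ncard + 1 = Fintype.card V) : G.IsTree := by
  refine ⟨hc, ?_⟩
  by_contra hac
  obtain ⟨e, heG, hconn, hset⟩ := delete_edge_of_cycle hc hac
  have hfin : G.edgeSet.Finite := Set.toFinite _
  have hlt : (G.edgeSet \ {e}).ncard + 1 = G.edgeSet.ncard :=
    Set.ncard_diff_singleton_add_one heG hfin
  have := card_le_of_connected _ (G \ fromEdgeSet {e}) rfl hconn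
  rw [hset] at this
  omega

lemma isTree_map {W : Type*} [Fintype W] {H : SimpleGraph W} (φ : G ≃g H) (hG : G.IsTree) :
    H.IsTree := by
  refine isTree_of_connected_of_ncard (hG.isConnected.map φ.toHom φ.toEquiv.surjective) ?_
  have h1 : H.edgeSet.ncard = G.edgeSet.ncard := by
    rw [← Nat.card_coe_set_eq, ← Nat.card_coe_set_eq]
    exact Nat.card_congr φ.mapEdgeSet.symm
  rw [h1, ← Fintype.card_congr φ.toEquiv]
  exact tree_ncard_edge hG

end TreeCriterion

abbrev VV (k : ℕ) : Type := Fin (k+3) ⊕ Fin (k+1)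

def up {k : ℕ} : VV k → VV (k+1) := Sum.map Fin.castSucc Fin.castSucc

def LL (k : ℕ) : VV (k+1) := Sum.inl (Fin.last (k+3))
def NN (k : ℕ) : VV (k+1) := Sum.inr (Fin.last (k+1))

lemma up_injective {k : ℕ} : Function.Injective (up (k := k)) := by
  rintro (a|a) (b|b) h <;> simp [up] at h <;> simp [h]

lemma up_ne_LL {k : ℕ} (v : VV k) : up v ≠ LL k := by
  rcases v with a | a <;> simp [up, LL, Fin.ext_iff]
  omega

lemma up_ne_NN {k : ℕ} (v : VV k) : up v ≠ NN k := by
  rcases v with a | a <;> simp [up, NN, Fin.ext_iff]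
  omega

lemma LL_ne_NN {k : ℕ} : LL k ≠ NN k := by simp [LL, NN]

lemma cases_up {k : ℕ} (p : VV (k+1)) : p = LL k ∨ p = NN k ∨ ∃ v, p = up v := by
  rcases p with a | a
  · by_cases h : a = Fin.last _
    · exact Or.inl (by simp [LL, h])
    · exact Or.inr (Or.inr ⟨inl (a.castPred h), by simp [up]⟩)
  · by_cases h : a = Fin.last _
    · exact Or.inr (Or.inl (by simp [NN, h]))
    · exact Or.inr (Or.inr ⟨inr (a.castPred h), by simp [up]⟩)

noncomputable def down {k : ℕ} : VV (k+1) → VV k :=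
  Sum.map (fun i => if h : i = Fin.last _ then 0 else i.castPred h)
          (fun i => if h : i = Fin.last _ then 0 else i.castPred h)

@[simp] lemma down_up {k : ℕ} (v : VV k) : down (up v) = v := by
  rcases v with a | a <;> simp [down, up, (Fin.castSucc_lt_last a).ne]

lemma up_down {k : ℕ} {p : VV (k+1)} (h1 : p ≠ LL k) (h2 : p ≠ NN k) :
    up (down p) = p := by
  rcases cases_up p with h | h | ⟨v, rfl⟩
  · exact absurd h h1
  · exact absurd h h2
  · rw [down_up]

def subdiv {k : ℕ} (G : SimpleGraph (VV k)) (x y : VV k) : SimpleGraph (VV (k+1)) where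
  Adj p q := (∃ u v, G.Adj u v ∧ s(u,v) ≠ s(x,y) ∧ p = up u ∧ q = up v)
    ∨ (p = NN k ∧ (q = LL k ∨ q = up x ∨ q = up y))
    ∨ (q = NN k ∧ (p = LL k ∨ p = up x ∨ p = up y))
  symm := by
    constructor
    rintro p q (⟨u, v, h1, h2, rfl, rfl⟩ | h | h)
    · exact Or.inl ⟨v, u, h1.symm, fun h => h2 ((Sym2.eq_swap).trans h), rfl, rfl⟩
    · exact Or.inr (Or.inr h)
    · exact Or.inr (Or.inl h)
  loopless := by
    constructor
    rintro p (⟨u, v, h1, h2, rfl, h⟩ | ⟨rfl, h | h | h⟩ | ⟨rfl, h | h | h⟩) <;>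
      first
        | exact G.loopless.irrefl u (by rwa [← up_injective h] at h1)
        | exact LL_ne_NN h.symm
        | exact up_ne_NN _ h.symm
        | exact LL_ne_NN h
        | exact up_ne_NN _ h

lemma subdiv_comm {k : ℕ} (G : SimpleGraph (VV k)) (x y : VV k) :
    subdiv G x y = subdiv G y x := by
  ext p q
  constructor <;>
  · rintro (⟨u, v, h1, h2, rfl, rfl⟩ | ⟨h0, h | h | h⟩ | ⟨h0, h | h | h⟩) <;>
      first
        | exact Or.inl ⟨u, v, h1, fun h => h2 (h.trans Sym2.eq_swap), rfl, rfl⟩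
        | exact Or.inr (Or.inl ⟨h0, Or.inl h⟩)
        | exact Or.inr (Or.inl ⟨h0, Or.inr (Or.inr h)⟩)
        | exact Or.inr (Or.inl ⟨h0, Or.inr (Or.inl h)⟩)
        | exact Or.inr (Or.inr ⟨h0, Or.inl h⟩)
        | exact Or.inr (Or.inr ⟨h0, Or.inr (Or.inr h)⟩)
        | exact Or.inr (Or.inr ⟨h0, Or.inr (Or.inl h)⟩)

@[simp] lemma subdiv_adj_up_up {k : ℕ} {G : SimpleGraph (VV k)} {x y u v : VV k} :
    (subdiv G x y).Adj (up u) (up v) ↔ G.Adj u v ∧ s(u,v) ≠ s(x,y) := by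
  constructor
  · rintro (⟨a, b, h1, h2, ha, hb⟩ | ⟨h, _⟩ | ⟨h, _⟩)
    · rw [up_injective ha, up_injective hb]; exact ⟨h1, h2⟩
    · exact absurd h (up_ne_NN u)
    · exact absurd h (up_ne_NN v)
  · rintro ⟨h1, h2⟩
    exact Or.inl ⟨u, v, h1, h2, rfl, rfl⟩

@[simp] lemma subdiv_adj_NN {k : ℕ} {G : SimpleGraph (VV k)} {x y : VV k} {q : VV (k+1)} :
    (subdiv G x y).Adj (NN k) q ↔ (q = LL k ∨ q = up x ∨ q = up y) := by
  constructor
  · rintro (⟨a, b, h1, h2, ha, hb⟩ | ⟨_, h⟩ | ⟨rfl, h | h | h⟩)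
    · exact absurd ha.symm (up_ne_NN a)
    · exact h
    · exact absurd h LL_ne_NN.symm
    · exact absurd h (up_ne_NN x).symm
    · exact absurd h (up_ne_NN y).symm
  · intro h; exact Or.inr (Or.inl ⟨rfl, h⟩)

@[simp] lemma subdiv_adj_LL {k : ℕ} {G : SimpleGraph (VV k)} {x y : VV k} {q : VV (k+1)} :
    (subdiv G x y).Adj (LL k) q ↔ q = NN k := by
  constructor
  · rintro (⟨a, b, h1, h2, ha, hb⟩ | ⟨h, _⟩ | ⟨rfl, h⟩)
    · exact absurd ha.symm (up_ne_LL a)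
    · exact absurd h LL_ne_NN
    · rfl
  · rintro rfl
    exact Or.inr (Or.inr ⟨rfl, Or.inl rfl⟩)

def contract {k : ℕ} (G' : SimpleGraph (VV (k+1))) : SimpleGraph (VV k) where
  Adj u v := u ≠ v ∧ (G'.Adj (up u) (up v) ∨ (G'.Adj (up u) (NN k) ∧ G'.Adj (up v) (NN k)))
  symm := by
    constructor
    rintro u v ⟨h1, h2 | h3⟩
    · exact ⟨h1.symm, Or.inl h2.symm⟩
    · exact ⟨h1.symm, Or.inr ⟨h3.2, h3.1⟩⟩
  loopless := ⟨fun u h => h.1 rfl⟩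

@[simp] lemma contract_adj {k : ℕ} {G' : SimpleGraph (VV (k+1))} {u v : VV k} :
    (contract G').Adj u v ↔
      u ≠ v ∧ (G'.Adj (up u) (up v) ∨ (G'.Adj (up u) (NN k) ∧ G'.Adj (up v) (NN k))) :=
  Iff.rfl

variable {k : ℕ} {G : SimpleGraph (VV k)} {x y : VV k}

lemma mem_pair_of_eq {u v : VV k} (h : s(u,v) = s(x,y)) : u = x ∨ u = y := by
  rw [Sym2.eq_iff] at h; tauto

lemma subdiv_nbr_LL : (subdiv G x y).neighborSet (LL k) = {NN k} := by
  ext q; simp [mem_neighborSet]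

lemma subdiv_nbr_NN : (subdiv G x y).neighborSet (NN k) = {LL k, up x, up y} := by
  ext q; simp [mem_neighborSet]

lemma subdiv_nbr_up {v : VV k} (hx : v ≠ x) (hy : v ≠ y) :
    (subdiv G x y).neighborSet (up v) = up '' G.neighborSet v := by
  ext q
  simp only [mem_neighborSet, Set.mem_image]
  constructor
  · rintro (⟨a, b, h1, h2, ha, rfl⟩ | ⟨h, _⟩ | ⟨rfl, h | h | h⟩)
    · exact ⟨b, by rwa [← up_injective ha] at h1, rfl⟩
    · exact absurd h (up_ne_NN v)
    · exact absurd h (up_ne_LL v)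
    · exact absurd (up_injective h) hx
    · exact absurd (up_injective h) hy
  · rintro ⟨w, hw, rfl⟩
    refine Or.inl ⟨v, w, hw, fun h => ?_, rfl, rfl⟩
    rcases mem_pair_of_eq h with rfl | rfl
    · exact hx rfl
    · exact hy rfl

lemma subdiv_nbr_up_x (hadj : G.Adj x y) :
    (subdiv G x y).neighborSet (up x) = up '' (G.neighborSet x \ {y}) ∪ {NN k} := by
  have hxy : x ≠ y := hadj.ne
  ext q
  simp only [mem_neighborSet, Set.mem_union, Set.mem_image, Set.mem_diff,
    Set.mem_singleton_iff]
  constructor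
  · rintro (⟨a, b, h1, h2, ha, rfl⟩ | ⟨h, _⟩ | ⟨rfl, h⟩)
    · rw [← up_injective ha] at h1 h2
      refine Or.inl ⟨b, ⟨h1, fun hb => ?_⟩, rfl⟩
      exact h2 (by rw [hb])
    · exact absurd h (up_ne_NN x)
    · exact Or.inr rfl
  · rintro (⟨w, ⟨hw, hwy⟩, rfl⟩ | rfl)
    · refine Or.inl ⟨x, w, hw, fun h => ?_, rfl, rfl⟩
      rw [Sym2.eq_iff] at h
      rcases h with ⟨-, rfl⟩ | ⟨rfl, rfl⟩
      · exact hwy rfl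
      · exact hxy rfl
    · exact Or.inr (Or.inr ⟨rfl, Or.inr (Or.inl rfl)⟩)

lemma subdiv_deg_up_x (hadj : G.Adj x y) :
    ((subdiv G x y).neighborSet (up x)).ncard = (G.neighborSet x).ncard := by
  have hN : NN k ∉ up '' (G.neighborSet x \ {y}) := by
    rintro ⟨w, -, hw⟩; exact up_ne_NN w hw
  rw [subdiv_nbr_up_x hadj, Set.union_singleton,
    Set.ncard_insert_of_notMem hN ((Set.toFinite _).image _),
    Set.ncard_image_of_injective _ up_injective]
  have h1 := Set.ncard_diff_singleton_add_one
    (show y ∈ G.neighborSet x from hadj) (Set.toFinite _)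
  omega

lemma subdiv_deg_up (hadj : G.Adj x y) (v : VV k) :
    ((subdiv G x y).neighborSet (up v)).ncard = (G.neighborSet v).ncard := by
  by_cases hx : v = x
  · subst hx; exact subdiv_deg_up_x hadj
  by_cases hy : v = y
  · subst hy; rw [subdiv_comm]; exact subdiv_deg_up_x hadj.symm
  · rw [subdiv_nbr_up hx hy, Set.ncard_image_of_injective _ up_injective]

lemma NN_not_mem_map (e : Sym2 (VV k)) {w : VV (k+1)} (h : Sym2.map up e = s(NN k, w)) :
    False := by
  induction e with
  | h u v =>
    rw [Sym2.map_pair_eq, Sym2.eq_iff] at h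
    rcases h with ⟨h, -⟩ | ⟨-, h⟩
    · exact up_ne_NN u h
    · exact up_ne_NN v h

lemma subdiv_edgeSet (hadj : G.Adj x y) :
    (subdiv G x y).edgeSet = (Sym2.map up '' (G.edgeSet \ {s(x,y)})) ∪
      {s(NN k, LL k), s(NN k, up x), s(NN k, up y)} := by
  ext e
  induction e with
  | h p q =>
    simp only [mem_edgeSet, Set.mem_union, Set.mem_image, Set.mem_diff,
      Set.mem_singleton_iff, Set.mem_insert_iff]
    constructor
    · rintro (⟨u, v, h1, h2, rfl, rfl⟩ | ⟨rfl, rfl | rfl | rfl⟩ | ⟨rfl, rfl | rfl | rfl⟩)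
      · exact Or.inl ⟨s(u, v), ⟨h1, h2⟩, by rw [Sym2.map_pair_eq]⟩
      · exact Or.inr (Or.inl rfl)
      · exact Or.inr (Or.inr (Or.inl rfl))
      · exact Or.inr (Or.inr (Or.inr rfl))
      · exact Or.inr (Or.inl Sym2.eq_swap)
      · exact Or.inr (Or.inr (Or.inl Sym2.eq_swap))
      · exact Or.inr (Or.inr (Or.inr Sym2.eq_swap))
    · rintro (⟨e', he, hmap⟩ | h | h | h)
      · revert he hmap
        induction e' with
        | h u v =>
          rintro ⟨he1, he2⟩ hmap
          rw [Sym2.map_pair_eq, Sym2.eq_iff] at hmap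
          rcases hmap with ⟨rfl, rfl⟩ | ⟨rfl, rfl⟩
          · exact Or.inl ⟨u, v, he1, he2, rfl, rfl⟩
          · exact Or.inl ⟨v, u, he1.symm, fun h => he2 (Sym2.eq_swap.trans h), rfl, rfl⟩
      · rw [Sym2.eq_iff] at h
        rcases h with ⟨rfl, rfl⟩ | ⟨rfl, rfl⟩
        · exact Or.inr (Or.inl ⟨rfl, Or.inl rfl⟩)
        · exact Or.inr (Or.inr ⟨rfl, Or.inl rfl⟩)
      · rw [Sym2.eq_iff] at h
        rcases h with ⟨rfl, rfl⟩ | ⟨rfl, rfl⟩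
        · exact Or.inr (Or.inl ⟨rfl, Or.inr (Or.inl rfl)⟩)
        · exact Or.inr (Or.inr ⟨rfl, Or.inr (Or.inl rfl)⟩)
      · rw [Sym2.eq_iff] at h
        rcases h with ⟨rfl, rfl⟩ | ⟨rfl, rfl⟩
        · exact Or.inr (Or.inl ⟨rfl, Or.inr (Or.inr rfl)⟩)
        · exact Or.inr (Or.inr ⟨rfl, Or.inr (Or.inr rfl)⟩)

lemma subdiv_edge_ncard (hadj : G.Adj x y) :
    (subdiv G x y).edgeSet.ncard = G.edgeSet.ncard + 2 := by
  have hxy : x ≠ y := hadj.ne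
  rw [subdiv_edgeSet hadj]
  have hdisj : Disjoint (Sym2.map up '' (G.edgeSet \ {s(x,y)}))
      ({s(NN k, LL k), s(NN k, up x), s(NN k, up y)} : Set (Sym2 (VV (k+1)))) := by
    rw [Set.disjoint_right]
    rintro e (rfl | rfl | rfl) ⟨e', -, hmap⟩ <;> exact NN_not_mem_map e' hmap
  rw [Set.ncard_union_eq hdisj ((Set.toFinite _).image _) (Set.toFinite _),
    Set.ncard_image_of_injective _ (Sym2.map.injective up_injective)]
  have d1 : s(NN k, LL k) ≠ s(NN k, up x) := by
    rw [Ne, Sym2.eq_iff]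
    rintro (⟨-, h⟩ | ⟨h, -⟩)
    · exact up_ne_LL x h.symm
    · exact up_ne_NN x h.symm
  have d2 : s(NN k, LL k) ≠ s(NN k, up y) := by
    rw [Ne, Sym2.eq_iff]
    rintro (⟨-, h⟩ | ⟨h, -⟩)
    · exact up_ne_LL y h.symm
    · exact up_ne_NN y h.symm
  have d3 : s(NN k, up x) ≠ s(NN k, up y) := by
    rw [Ne, Sym2.eq_iff]
    rintro (⟨-, h⟩ | ⟨h, -⟩)
    · exact hxy (up_injective h)
    · exact up_ne_NN y h.symm
  have h3 : ({s(NN k, LL k), s(NN k, up x), s(NN k, up y)} :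
      Set (Sym2 (VV (k+1)))).ncard = 3 :=
    Set.ncard_eq_three.2 ⟨_, _, _, d1, d2, d3, rfl⟩
  have h1 : (G.edgeSet \ {s(x,y)}).ncard + 1 = G.edgeSet.ncard :=
    Set.ncard_diff_singleton_add_one hadj (Set.toFinite _)
  omega

lemma subdiv_connected (hc : G.Connected) (hadj : G.Adj x y) :
    (subdiv G x y).Connected := by
  have hxNN : (subdiv G x y).Adj (NN k) (up x) := by simp
  have hyNN : (subdiv G x y).Adj (NN k) (up y) := by simp
  have hpush : ∀ a b : VV k, G.Adj a b → (subdiv G x y).Reachable (up a) (up b) := by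
    intro a b hab
    by_cases h : s(a, b) = s(x, y)
    · rw [Sym2.eq_iff] at h
      rcases h with ⟨h1, h2⟩ | ⟨h1, h2⟩
      · rw [h1, h2]
        exact hxNN.symm.reachable.trans hyNN.reachable
      · rw [h1, h2]
        exact hyNN.symm.reachable.trans hxNN.reachable
    · exact (subdiv_adj_up_up.2 ⟨hab, h⟩).reachable
  have hNN : ∀ p, (subdiv G x y).Reachable p (NN k) := by
    intro p
    rcases cases_up p with rfl | rfl | ⟨v, rfl⟩
    · exact ((subdiv_adj_LL).2 rfl).reachable
    · exact Reachable.refl _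
    · exact (reachable_push up hpush (hc.preconnected v x)).trans hxNN.symm.reachable
  exact Connected.mk fun p q => (hNN p).trans (hNN q).symm

lemma card_VV (k : ℕ) : Fintype.card (VV k) = 2*k + 4 := by
  simp only [Fintype.card_sum, Fintype.card_fin]; omega

lemma subdiv_trivalent (hG : IsTrivalentLeafTree (k+3) G) (hadj : G.Adj x y) :
    IsTrivalentLeafTree (k+4) (subdiv G x y) := by
  obtain ⟨htree, hleaf, hint⟩ := hG
  have hxy : x ≠ y := hadj.ne
  refine ⟨isTree_of_connected_of_ncard (subdiv_connected htree.isConnected hadj) ?_,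
    ?_, ?_⟩
  · show (subdiv G x y).edgeSet.ncard + 1 = Fintype.card (VV (k+1))
    rw [subdiv_edge_ncard hadj, card_VV]
    have h : G.edgeSet.ncard + 1 = Fintype.card (VV k) := tree_ncard_edge htree
    rw [card_VV] at h
    omega
  · intro i
    by_cases h : i = Fin.last (k+3)
    · subst h
      show ((subdiv G x y).neighborSet (LL k)).ncard = 1
      rw [subdiv_nbr_LL]
      exact Set.ncard_singleton _
    · have hi : (inl i : VV (k+1)) = up (inl (i.castPred h)) := by simp [up]
      rw [hi, subdiv_deg_up hadj]
      exact hleaf _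
  · intro j
    by_cases h : j = Fin.last (k+1)
    · subst h
      show ((subdiv G x y).neighborSet (NN k)).ncard = 3
      rw [subdiv_nbr_NN]
      exact Set.ncard_eq_three.2 ⟨_, _, _, fun h => up_ne_LL x h.symm,
        fun h => up_ne_LL y h.symm, fun h => hxy (up_injective h), rfl⟩
    · have hj : (inr j : VV (k+1)) = up (inr (j.castPred h)) := by simp [up]
      rw [hj, subdiv_deg_up hadj]
      exact hint _

variable {k : ℕ} {G' : SimpleGraph (VV (k+1))}

lemma nbr_ne {p q : VV (k+1)} (h : q ∈ G'.neighborSet p) : q ≠ p := (G'.ne_of_adj h).symm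

lemma nbr_LL_eq (hG' : IsTrivalentLeafTree (k+4) G') (hadj : G'.Adj (LL k) (NN k)) :
    G'.neighborSet (LL k) = {NN k} := by
  obtain ⟨-, hleaf, -⟩ := hG'
  obtain ⟨w, hw⟩ := Set.ncard_eq_one.1 (hleaf (Fin.last (k+3)))
  have hmem : NN k ∈ G'.neighborSet (LL k) := hadj
  rw [show G'.neighborSet (inl (Fin.last (k+3))) = G'.neighborSet (LL k) from rfl] at hw
  rw [hw] at hmem ⊢
  rw [Set.mem_singleton_iff] at hmem
  rw [hmem]

lemma nbr_NN_eq (hG' : IsTrivalentLeafTree (k+4) G') (hadj : G'.Adj (LL k) (NN k)) :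
    ∃ a b : VV k, a ≠ b ∧ G'.neighborSet (NN k) = {LL k, up a, up b} := by
  obtain ⟨-, -, hint⟩ := hG'
  obtain ⟨p, q, r, hpq, hpr, hqr, hset⟩ := Set.ncard_eq_three.1 (hint (Fin.last (k+1)))
  rw [show G'.neighborSet (inr (Fin.last (k+1))) = G'.neighborSet (NN k) from rfl] at hset
  have hLL : LL k ∈ G'.neighborSet (NN k) := hadj.symm
  have hne : ∀ w ∈ G'.neighborSet (NN k), w ≠ NN k := fun w hw => nbr_ne hw
  have hup : ∀ w ∈ G'.neighborSet (NN k), w ≠ LL k → ∃ v, w = up v := by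
    intro w hw hwLL
    exact ⟨down w, (up_down hwLL (hne w hw)).symm⟩
  rw [hset] at hLL
  have hpm : p ∈ G'.neighborSet (NN k) := by rw [hset]; simp
  have hqm : q ∈ G'.neighborSet (NN k) := by rw [hset]; simp
  have hrm : r ∈ G'.neighborSet (NN k) := by rw [hset]; simp
  rcases hLL with rfl | rfl | rfl
  · obtain ⟨a, rfl⟩ := hup q hqm (Ne.symm hpq)
    obtain ⟨b, rfl⟩ := hup r hrm (Ne.symm hpr)
    exact ⟨a, b, fun h => hqr (by rw [h]), hset⟩
  · obtain ⟨a, rfl⟩ := hup p hpm hpq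
    obtain ⟨b, rfl⟩ := hup r hrm (Ne.symm hqr)
    refine ⟨a, b, fun h => hpr (by rw [h]), hset.trans ?_⟩
    rw [Set.insert_comm]
  · obtain ⟨a, rfl⟩ := hup p hpm hpr
    obtain ⟨b, rfl⟩ := hup q hqm hqr
    refine ⟨a, b, fun h => hpq (by rw [h]), hset.trans ?_⟩
    ext w
    simp only [Set.mem_insert_iff, Set.mem_singleton_iff]
    tauto

lemma not_adj_ab (hG' : IsTrivalentLeafTree (k+4) G') {a b : VV k} (hab : a ≠ b)
    (ha : G'.Adj (NN k) (up a)) (hb : G'.Adj (NN k) (up b)) : ¬ G'.Adj (up a) (up b) := by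
  intro h
  have e1 : s(NN k, up a) ≠ s(up a, up b) := by
    rw [Ne, Sym2.eq_iff]
    rintro (⟨h1, -⟩ | ⟨h1, -⟩)
    · exact up_ne_NN a h1.symm
    · exact up_ne_NN b h1.symm
  have e2 : s(NN k, up a) ≠ s(up b, NN k) := by
    rw [Ne, Sym2.eq_iff]
    rintro (⟨h1, -⟩ | ⟨-, h2⟩)
    · exact up_ne_NN b h1.symm
    · exact hab (up_injective h2)
  have e3 : s(up a, up b) ≠ s(up b, NN k) := by
    rw [Ne, Sym2.eq_iff]
    rintro (⟨h1, -⟩ | ⟨h1, -⟩)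
    · exact hab (up_injective h1)
    · exact up_ne_NN a h1
  have v1 : up a ≠ up b := fun hh => hab (up_injective hh)
  have hcyc : (Walk.cons ha (Walk.cons h (Walk.cons hb.symm Walk.nil))).IsCycle := by
    rw [Walk.isCycle_def]
    refine ⟨?_, by simp, ?_⟩
    · rw [Walk.isTrail_def]
      simp only [Walk.edges_cons, Walk.edges_nil]
      refine List.nodup_cons.2 ⟨?_, List.nodup_cons.2 ⟨?_, List.nodup_singleton _⟩⟩
      · simp only [List.mem_cons, List.mem_singleton, List.not_mem_nil]
        push_neg
        exact ⟨e1, e2, trivial⟩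
      · simp only [List.mem_singleton, List.mem_cons, List.not_mem_nil]
        push_neg
        exact ⟨e3, trivial⟩
    · simp only [Walk.support_cons, Walk.support_nil, List.tail_cons]
      refine List.nodup_cons.2 ⟨?_, List.nodup_cons.2 ⟨?_, List.nodup_singleton _⟩⟩
      · simp only [List.mem_cons, List.mem_singleton, List.not_mem_nil]
        push_neg
        exact ⟨v1, up_ne_NN a, trivial⟩
      · simp only [List.mem_singleton, List.mem_cons, List.not_mem_nil]
        push_neg
        exact ⟨up_ne_NN b, trivial⟩
  exact hG'.1.IsAcyclic _ hcyc

noncomputable def dn {k : ℕ} (a : VV k) (p : VV (k+1)) : VV k :=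
  if p = LL k ∨ p = NN k then a else down p

lemma dn_up {k : ℕ} (a : VV k) (v : VV k) : dn a (up v) = v := by
  rw [dn, if_neg, down_up]
  push_neg
  exact ⟨up_ne_LL v, up_ne_NN v⟩

lemma contract_connected (hG' : IsTrivalentLeafTree (k+4) G')
    (hadj : G'.Adj (LL k) (NN k)) {a b : VV k} (hab : a ≠ b)
    (hset : G'.neighborSet (NN k) = {LL k, up a, up b}) :
    (contract G').Connected := by
  have hLL := nbr_LL_eq hG' hadj
  have haN : G'.Adj (NN k) (up a) := by rw [← mem_neighborSet, hset]; simp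
  have hbN : G'.Adj (NN k) (up b) := by rw [← mem_neighborSet, hset]; simp
  have hcab : (contract G').Adj a b := ⟨hab, Or.inr ⟨haN.symm, hbN.symm⟩⟩
  have hpush : ∀ p q, G'.Adj p q → (contract G').Reachable (dn a p) (dn a q) := by
    have key : ∀ p q, G'.Adj p q → p = NN k → (contract G').Reachable (dn a p) (dn a q) := by
      rintro p q hpq rfl
      have hq : q ∈ G'.neighborSet (NN k) := hpq
      rw [hset] at hq
      have hdnN : dn a (NN k) = a := if_pos (Or.inr rfl)
      rcases hq with rfl | rfl | rfl
      · rw [hdnN, dn, if_pos (Or.inl rfl)]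
      · rw [hdnN, dn_up]
      · rw [hdnN, dn_up]
        exact hcab.reachable
    intro p q hpq
    rcases cases_up p with rfl | rfl | ⟨u, rfl⟩
    · have hq : q ∈ G'.neighborSet (LL k) := hpq
      rw [hLL, Set.mem_singleton_iff] at hq
      subst hq
      rw [dn, if_pos (Or.inl rfl), dn, if_pos (Or.inr rfl)]
    · exact key _ _ hpq rfl
    · rcases cases_up q with rfl | rfl | ⟨v, rfl⟩
      · have hp : up u ∈ G'.neighborSet (LL k) := hpq.symm
        rw [hLL, Set.mem_singleton_iff] at hp
        exact absurd hp (up_ne_NN u)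
      · exact (key _ _ hpq.symm rfl).symm
      · rw [dn_up, dn_up]
        exact Adj.reachable ⟨fun h => G'.loopless.irrefl _ (h ▸ hpq), Or.inl hpq⟩
  refine Connected.mk fun u v => ?_
  have h := reachable_push (dn a) hpush (hG'.1.isConnected.preconnected (up u) (up v))
  rwa [dn_up, dn_up] at h

lemma subdiv_contract (hG' : IsTrivalentLeafTree (k+4) G')
    (hadj : G'.Adj (LL k) (NN k)) {a b : VV k} (hab : a ≠ b)
    (hset : G'.neighborSet (NN k) = {LL k, up a, up b}) :
    subdiv (contract G') a b = G' := by
  have hLL := nbr_LL_eq hG' hadj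
  have haN : G'.Adj (NN k) (up a) := by rw [← mem_neighborSet, hset]; simp
  have hbN : G'.Adj (NN k) (up b) := by rw [← mem_neighborSet, hset]; simp
  have hnadj := not_adj_ab hG' hab haN hbN
  ext p q
  constructor
  · rintro (⟨u, v, ⟨huv, h | ⟨h1, h2⟩⟩, h2', rfl, rfl⟩ | ⟨rfl, rfl | rfl | rfl⟩ |
      ⟨rfl, rfl | rfl | rfl⟩)
    · exact h
    · -- u, v both neighbors of NN: they are among a, b so s(u,v) = s(a,b), contradiction
      exfalso
      have hu : up u ∈ G'.neighborSet (NN k) := h1.symm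
      have hv : up v ∈ G'.neighborSet (NN k) := h2.symm
      rw [hset] at hu hv
      simp only [Set.mem_insert_iff, Set.mem_singleton_iff] at hu hv
      rcases hu with hu | hu | hu
      · exact up_ne_LL _ hu
      · rcases hv with hv | hv | hv
        · exact up_ne_LL _ hv
        · exact huv (up_injective (hu.trans hv.symm))
        · exact h2' (by rw [up_injective hu, up_injective hv])
      · rcases hv with hv | hv | hv
        · exact up_ne_LL _ hv
        · refine h2' ?_
          rw [up_injective hu, up_injective hv]
          exact Sym2.eq_swap
        · exact huv (up_injective (hu.trans hv.symm))
    · exact hadj.symm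
    · exact haN
    · exact hbN
    · exact hadj
    · exact haN.symm
    · exact hbN.symm
  · intro h
    rcases cases_up p with rfl | rfl | ⟨u, rfl⟩
    · have hq : q ∈ G'.neighborSet (LL k) := h
      rw [hLL, Set.mem_singleton_iff] at hq
      subst hq
      exact subdiv_adj_LL.2 rfl
    · have hq : q ∈ G'.neighborSet (NN k) := h
      rw [hset] at hq
      exact subdiv_adj_NN.2 hq
    · rcases cases_up q with rfl | rfl | ⟨v, rfl⟩
      · have hp : up u ∈ G'.neighborSet (LL k) := h.symm
        rw [hLL, Set.mem_singleton_iff] at hp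
        exact absurd hp (up_ne_NN u)
      · have hp : up u ∈ G'.neighborSet (NN k) := h.symm
        rw [hset] at hp
        rcases hp with hp | hp | hp
        · exact absurd hp (up_ne_LL u)
        · exact ((subdiv_adj_NN (G := contract G')).2 (Or.inr (Or.inl hp))).symm
        · exact ((subdiv_adj_NN (G := contract G')).2 (Or.inr (Or.inr hp))).symm
      · refine subdiv_adj_up_up.2 ⟨⟨fun he => G'.loopless.irrefl _ (he ▸ h), Or.inl h⟩, fun he => ?_⟩
        rw [Sym2.eq_iff] at he
        rcases he with ⟨rfl, rfl⟩ | ⟨rfl, rfl⟩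
        · exact hnadj h
        · exact hnadj h.symm

lemma contract_adj_ab (hadj : G'.Adj (LL k) (NN k)) {a b : VV k} (hab : a ≠ b)
    (hset : G'.neighborSet (NN k) = {LL k, up a, up b}) : (contract G').Adj a b := by
  have haN : G'.Adj (NN k) (up a) := by rw [← mem_neighborSet, hset]; simp
  have hbN : G'.Adj (NN k) (up b) := by rw [← mem_neighborSet, hset]; simp
  exact ⟨hab, Or.inr ⟨haN.symm, hbN.symm⟩⟩

lemma contract_trivalent (hG' : IsTrivalentLeafTree (k+4) G')
    (hadj : G'.Adj (LL k) (NN k)) {a b : VV k} (hab : a ≠ b)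
    (hset : G'.neighborSet (NN k) = {LL k, up a, up b}) :
    IsTrivalentLeafTree (k+3) (contract G') := by
  have hcab := contract_adj_ab hadj hab hset
  have hsc := subdiv_contract hG' hadj hab hset
  have hdeg : ∀ v : VV k, ((contract G').neighborSet v).ncard =
      (G'.neighborSet (up v)).ncard := by
    intro v
    have h := subdiv_deg_up (G := contract G') hcab v
    rw [hsc] at h
    exact h.symm
  obtain ⟨htree', hleaf', hint'⟩ := hG'
  refine ⟨isTree_of_connected_of_ncard
    (contract_connected ⟨htree', hleaf', hint'⟩ hadj hab hset) ?_, ?_, ?_⟩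
  · have h1 : (subdiv (contract G') a b).edgeSet.ncard = (contract G').edgeSet.ncard + 2 :=
      subdiv_edge_ncard hcab
    rw [hsc] at h1
    have h2 : G'.edgeSet.ncard + 1 = Fintype.card (VV (k+1)) := tree_ncard_edge htree'
    rw [card_VV] at h2
    show (contract G').edgeSet.ncard + 1 = Fintype.card (VV k)
    rw [card_VV]
    omega
  · intro i
    rw [show (inl i : VV k) = inl i from rfl, hdeg (inl i)]
    exact hleaf' i.castSucc
  · intro j
    rw [show (inr j : VV k) = inr j from rfl, hdeg (inr j)]
    exact hint' j.castSucc

section IsoTransfer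
variable {m : ℕ} {G H : SimpleGraph (Fin m ⊕ Fin (m-2))}

lemma iso_nbr_ncard (φ : G ≃g H) (v : Fin m ⊕ Fin (m-2)) :
    (H.neighborSet (φ v)).ncard = (G.neighborSet v).ncard := by
  rw [← Nat.card_coe_set_eq, ← Nat.card_coe_set_eq]
  exact Nat.card_congr (φ.mapNeighborSet v).symm

lemma iso_fix_inr (φ : G ≃g H) (hφ : ∀ i, φ (inl i) = inl i) (j : Fin (m-2)) :
    ∃ j', φ (inr j) = inr j' := by
  rcases h : φ (inr j) with i | j'
  · exfalso
    have := φ.toEquiv.injective (h.trans (hφ i).symm)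
    simp at this
  · exact ⟨j', rfl⟩

lemma iso_symm_fix (φ : G ≃g H) (hφ : ∀ i, φ (inl i) = inl i) (i : Fin m) :
    φ.symm (inl i) = inl i := by
  have h : φ.toEquiv.symm (inl i) = inl i := by
    rw [Equiv.symm_apply_eq]
    exact (hφ i).symm
  exact h

lemma trivalent_of_iso (φ : G ≃g H) (hφ : ∀ i, φ (inl i) = inl i)
    (hG : IsTrivalentLeafTree m G) : IsTrivalentLeafTree m H := by
  obtain ⟨htree, hleaf, hint⟩ := hG
  refine ⟨isTree_map φ htree, fun i => ?_, fun j => ?_⟩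
  · rw [← hφ i, iso_nbr_ncard φ]
    exact hleaf i
  · obtain ⟨j', hj'⟩ := iso_fix_inr φ.symm (iso_symm_fix φ hφ) j
    have h2 : (inr j : Fin m ⊕ Fin (m-2)) = φ (inr j') := by
      rw [← hj']
      exact (φ.toEquiv.apply_symm_apply _).symm
    rw [h2, iso_nbr_ncard φ]
    exact hint j'

lemma leafIso_equivalence : Equivalence (LeafLabelledIso m) := by
  constructor
  · exact fun G => ⟨(Iso.refl : G.1 ≃g G.1), fun i => rfl⟩
  · rintro G H ⟨φ, hφ⟩
    exact ⟨φ.symm, iso_symm_fix φ hφ⟩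
  · rintro G H K ⟨φ, hφ⟩ ⟨ψ, hψ⟩
    exact ⟨φ.trans ψ, fun i => by
      show ψ (φ (inl i)) = inl i
      rw [hφ i, hψ i]⟩
end IsoTransfer

section Normalize
variable {k : ℕ} {G' : SimpleGraph (VV (k+1))}

lemma leaf_nbr_internal (hG' : IsTrivalentLeafTree (k+4) G') {q : VV (k+1)}
    (hadj : G'.Adj (LL k) q) : ∃ t : Fin (k+2), q = inr t := by
  rcases q with i | t
  · exfalso
    -- two adjacent leaves in a connected graph with ≥ 3 vertices
    obtain ⟨htree, hleaf, -⟩ := hG'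
    have h1 : G'.neighborSet (LL k) = {inl i} := by
      obtain ⟨w, hw⟩ := Set.ncard_eq_one.1 (hleaf (Fin.last (k+3)))
      have hmem : (inl i : VV (k+1)) ∈ G'.neighborSet (LL k) := hadj
      rw [show G'.neighborSet (inl (Fin.last (k+3))) = G'.neighborSet (LL k) from rfl] at hw
      rw [hw] at hmem ⊢
      rw [Set.mem_singleton_iff] at hmem
      rw [hmem]
    have h2 : G'.neighborSet (inl i) = {LL k} := by
      obtain ⟨w, hw⟩ := Set.ncard_eq_one.1 (hleaf i)
      have hmem : LL k ∈ G'.neighborSet (inl i) := hadj.symm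
      rw [hw] at hmem ⊢
      rw [Set.mem_singleton_iff] at hmem
      rw [hmem]
    have key : ∀ (u v : VV (k+1)) (p : G'.Walk u v),
        (u = LL k ∨ u = inl i) → (v = LL k ∨ v = inl i) := by
      intro u v p
      induction p with
      | nil => exact id
      | cons ha p ih =>
        rename_i a c _
        intro hu
        apply ih
        rcases hu with rfl | rfl
        · have : c ∈ G'.neighborSet (LL k) := ha
          rw [h1, Set.mem_singleton_iff] at this
          exact Or.inr this
        · have : c ∈ G'.neighborSet (inl i) := ha
          rw [h2, Set.mem_singleton_iff] at this
          exact Or.inl this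
    obtain ⟨p⟩ := htree.isConnected.preconnected (LL k) (NN k)
    rcases key _ _ p (Or.inl rfl) with h | h
    · exact LL_ne_NN h.symm
    · simp [NN] at h
  · exact ⟨t, rfl⟩

noncomputable def relabel (σ : Equiv.Perm (Fin (k+2))) (G : SimpleGraph (VV (k+1))) :
    SimpleGraph (VV (k+1)) :=
  G.map (Equiv.sumCongr (Equiv.refl (Fin (k+4))) σ).toEmbedding

noncomputable def relabelIso (σ : Equiv.Perm (Fin (k+2))) (G : SimpleGraph (VV (k+1))) :
    G ≃g relabel σ G :=
  SimpleGraph.Iso.map (Equiv.sumCongr (Equiv.refl (Fin (k+4))) σ) G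

lemma relabelIso_inl (σ : Equiv.Perm (Fin (k+2))) (G : SimpleGraph (VV (k+1)))
    (i : Fin (k+4)) : relabelIso σ G (inl i) = inl i := rfl

lemma relabelIso_inr (σ : Equiv.Perm (Fin (k+2))) (G : SimpleGraph (VV (k+1)))
    (j : Fin (k+2)) : relabelIso σ G (inr j) = inr (σ j) := rfl

lemma normalizeTri (hG' : IsTrivalentLeafTree (k+4) G') :
    ∃ H : SimpleGraph (VV (k+1)), ∃ φ : G' ≃g H, (∀ i, φ (inl i) = inl i) ∧
      IsTrivalentLeafTree (k+4) H ∧ H.Adj (LL k) (NN k) := by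
  have hex : ∃ q, G'.Adj (LL k) q := by
    obtain ⟨-, hleaf, -⟩ := hG'
    have h := hleaf (Fin.last (k+3))
    obtain ⟨w, hw⟩ := Set.ncard_eq_one.1 h
    exact ⟨w, by
      have : w ∈ G'.neighborSet (inl (Fin.last (k+3))) := by rw [hw]; rfl
      exact this⟩
  obtain ⟨q, hq⟩ := hex
  obtain ⟨t, rfl⟩ := leaf_nbr_internal hG' hq
  refine ⟨relabel (Equiv.swap t (Fin.last (k+1))) G',
    relabelIso (Equiv.swap t (Fin.last (k+1))) G',
    fun i => relabelIso_inl _ _ i, ?_, ?_⟩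
  · exact trivalent_of_iso (relabelIso _ G') (fun i => relabelIso_inl _ _ i) hG'
  · have hmap := (relabelIso (Equiv.swap t (Fin.last (k+1))) G').map_adj_iff.2 hq
    have h1 : (relabelIso (Equiv.swap t (Fin.last (k+1))) G') (LL k) = LL k :=
      relabelIso_inl _ _ _
    have h2 : (relabelIso (Equiv.swap t (Fin.last (k+1))) G') (inr t)
        = inr ((Equiv.swap t (Fin.last (k+1))) t) := relabelIso_inr _ _ _
    rw [h1, h2, Equiv.swap_apply_left] at hmap
    exact hmap

variable {k : ℕ} {T T' : SimpleGraph (VV k)} {x y x' y' : VV k}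

lemma adj_of_pair_eq {G : SimpleGraph (VV k)} {p q r s : VV k}
    (h : s(p, q) = s(r, s)) (hadj : G.Adj r s) : G.Adj p q := by
  rw [Sym2.eq_iff] at h
  rcases h with ⟨rfl, rfl⟩ | ⟨rfl, rfl⟩
  · exact hadj
  · exact hadj.symm

/-! ### Lifting an iso through subdivision -/

noncomputable def liftV (φ : VV k ≃ VV k) (p : VV (k+1)) : VV (k+1) :=
  if p = LL k then LL k else if p = NN k then NN k else up (φ (down p))

lemma liftV_LL (φ : VV k ≃ VV k) : liftV φ (LL k) = LL k := if_pos rfl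

lemma liftV_NN (φ : VV k ≃ VV k) : liftV φ (NN k) = NN k := by
  rw [liftV, if_neg (Ne.symm LL_ne_NN), if_pos rfl]

lemma liftV_up (φ : VV k ≃ VV k) (v : VV k) : liftV φ (up v) = up (φ v) := by
  rw [liftV, if_neg (up_ne_LL v), if_neg (up_ne_NN v), down_up]

lemma liftV_inv (φ : VV k ≃ VV k) (p : VV (k+1)) : liftV φ.symm (liftV φ p) = p := by
  rcases cases_up p with rfl | rfl | ⟨v, rfl⟩
  · rw [liftV_LL, liftV_LL]
  · rw [liftV_NN, liftV_NN]
  · rw [liftV_up, liftV_up, Equiv.symm_apply_apply]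

lemma liftV_adj (φ : T ≃g T') : ∀ p q, (subdiv T x y).Adj p q →
    (subdiv T' (φ x) (φ y)).Adj (liftV φ.toEquiv p) (liftV φ.toEquiv q) := by
  rintro p q (⟨u, v, h1, h2, rfl, rfl⟩ | ⟨rfl, rfl | rfl | rfl⟩ | ⟨rfl, rfl | rfl | rfl⟩)
  · rw [liftV_up, liftV_up]
    refine subdiv_adj_up_up.2 ⟨φ.map_adj_iff.2 h1, fun h => h2 ?_⟩
    have := Sym2.map.injective φ.toEquiv.injective (a₁ := s(u,v)) (a₂ := s(x,y))
    rw [Sym2.map_pair_eq, Sym2.map_pair_eq] at this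
    exact this h
  · rw [liftV_NN, liftV_LL]
    exact subdiv_adj_NN.2 (Or.inl rfl)
  · rw [liftV_NN, liftV_up]
    exact subdiv_adj_NN.2 (Or.inr (Or.inl rfl))
  · rw [liftV_NN, liftV_up]
    exact subdiv_adj_NN.2 (Or.inr (Or.inr rfl))
  · rw [liftV_NN, liftV_LL]
    exact (subdiv_adj_NN.2 (Or.inl rfl)).symm
  · rw [liftV_NN, liftV_up]
    exact (subdiv_adj_NN.2 (Or.inr (Or.inl rfl))).symm
  · rw [liftV_NN, liftV_up]
    exact (subdiv_adj_NN.2 (Or.inr (Or.inr rfl))).symm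

lemma liftV_inv₂ (φ : T ≃g T') (p : VV (k+1)) :
    liftV φ.symm.toEquiv (liftV φ.toEquiv p) = p := liftV_inv φ.toEquiv p

noncomputable def subdivIso (φ : T ≃g T') (x y : VV k) :
    subdiv T x y ≃g subdiv T' (φ x) (φ y) where
  toFun := liftV φ.toEquiv
  invFun := liftV φ.toEquiv.symm
  left_inv := liftV_inv φ.toEquiv
  right_inv := fun p => by
    have h := liftV_inv φ.toEquiv.symm p
    rwa [Equiv.symm_symm] at h
  map_rel_iff' := by
    intro p q
    show (subdiv T' (φ x) (φ y)).Adj (liftV φ.toEquiv p) (liftV φ.toEquiv q) ↔ _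
    constructor
    · intro h
      have h2 := liftV_adj φ.symm _ _ h
      rw [liftV_inv₂, liftV_inv₂] at h2
      have ex : φ.symm (φ x) = x := φ.toEquiv.symm_apply_apply x
      have ey : φ.symm (φ y) = y := φ.toEquiv.symm_apply_apply y
      rwa [ex, ey] at h2
    · exact liftV_adj φ p q

lemma subdivIso_inl (φ : T ≃g T') (hφ : ∀ i, φ (inl i) = inl i) (x y : VV k)
    (i : Fin (k+4)) : subdivIso φ x y (inl i) = inl i := by
  show liftV φ.toEquiv (inl i) = inl i
  by_cases h : i = Fin.last (k+3)
  · subst h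
    exact liftV_LL _
  · have hi : (inl i : VV (k+1)) = up (inl (i.castPred h)) := by simp [up]
    rw [hi, liftV_up]
    have h2 : φ.toEquiv (inl (i.castPred h)) = inl (i.castPred h) := hφ _
    rw [h2]

/-! ### Descending an iso through subdivision -/

section Descend
variable (ψ : subdiv T x y ≃g subdiv T' x' y') (hψ : ∀ i : Fin (k+4), ψ (inl i) = inl i)

include hψ in
lemma psi_LL : ψ (LL k) = LL k := hψ (Fin.last (k+3))

include hψ in
lemma psi_NN : ψ (NN k) = NN k := by
  have h : (subdiv T' x' y').Adj (ψ (LL k)) (ψ (NN k)) :=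
    ψ.map_adj_iff.2 (subdiv_adj_LL.2 rfl)
  rw [psi_LL ψ hψ] at h
  exact subdiv_adj_LL.1 h

include hψ in
lemma psi_up_ne (v : VV k) : ψ (up v) ≠ LL k ∧ ψ (up v) ≠ NN k := by
  constructor
  · intro h
    rw [← psi_LL ψ hψ] at h
    exact up_ne_LL v (ψ.toEquiv.injective h)
  · intro h
    rw [← psi_NN ψ hψ] at h
    exact up_ne_NN v (ψ.toEquiv.injective h)

noncomputable def descV (v : VV k) : VV k := down (ψ (up v))

include hψ in
lemma up_descV (v : VV k) : up (descV ψ v) = ψ (up v) :=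
  up_down (psi_up_ne ψ hψ v).1 (psi_up_ne ψ hψ v).2

include hψ in
lemma descV_mem (hT : T.Adj x y) {v : VV k} (hv : v = x ∨ v = y) :
    descV ψ v = x' ∨ descV ψ v = y' := by
  have hadj : (subdiv T x y).Adj (NN k) (up v) := by
    rcases hv with rfl | rfl
    · exact subdiv_adj_NN.2 (Or.inr (Or.inl rfl))
    · exact subdiv_adj_NN.2 (Or.inr (Or.inr rfl))
  have h := ψ.map_adj_iff.2 hadj
  rw [psi_NN ψ hψ, ← up_descV ψ hψ] at h
  rcases subdiv_adj_NN.1 h with h | h | h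
  · exact absurd h (up_ne_LL _)
  · exact Or.inl (up_injective h)
  · exact Or.inr (up_injective h)

include hψ in
lemma descV_pair (hT : T.Adj x y) : s(descV ψ x, descV ψ y) = s(x', y') := by
  have hne : descV ψ x ≠ descV ψ y := by
    intro h
    have : up (descV ψ x) = up (descV ψ y) := by rw [h]
    rw [up_descV ψ hψ, up_descV ψ hψ] at this
    exact hT.ne (up_injective (ψ.toEquiv.injective this))
  rcases descV_mem ψ hψ hT (Or.inl rfl) with h1 | h1 <;>
    rcases descV_mem ψ hψ hT (Or.inr rfl) with h2 | h2
  · exact absurd (h1.trans h2.symm) hne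
  · rw [h1, h2]
  · rw [h1, h2]; exact Sym2.eq_swap
  · exact absurd (h1.trans h2.symm) hne

include hψ in
lemma descV_adj (hT : T.Adj x y) (hT' : T'.Adj x' y') {u v : VV k} (huv : T.Adj u v) :
    T'.Adj (descV ψ u) (descV ψ v) := by
  by_cases h : s(u, v) = s(x, y)
  · refine adj_of_pair_eq ?_ hT'
    rw [Sym2.eq_iff] at h
    rcases h with ⟨rfl, rfl⟩ | ⟨rfl, rfl⟩
    · exact descV_pair ψ hψ hT
    · exact Sym2.eq_swap.trans (descV_pair ψ hψ hT)
  · have hadj := ψ.map_adj_iff.2 (subdiv_adj_up_up.2 ⟨huv, h⟩)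
    rw [← up_descV ψ hψ, ← up_descV ψ hψ] at hadj
    exact (subdiv_adj_up_up.1 hadj).1

include hψ in
lemma descV_inl (i : Fin (k+3)) : descV ψ (inl i) = inl i := by
  rw [descV, show (up (inl i) : VV (k+1)) = inl i.castSucc from rfl, hψ i.castSucc]
  exact down_up (inl i)
end Descend

lemma hpsi_symm (ψ : subdiv T x y ≃g subdiv T' x' y')
    (hψ : ∀ i : Fin (k+4), ψ (inl i) = inl i) (i : Fin (k+4)) :
    ψ.symm (inl i) = inl i := by
  have h : ψ.toEquiv.symm (inl i) = inl i := by
    rw [Equiv.symm_apply_eq]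
    exact (hψ i).symm
  exact h

noncomputable def descIso (ψ : subdiv T x y ≃g subdiv T' x' y')
    (hψ : ∀ i : Fin (k+4), ψ (inl i) = inl i) (hT : T.Adj x y) (hT' : T'.Adj x' y') :
    T ≃g T' where
  toFun := descV ψ
  invFun := descV ψ.symm
  left_inv := fun v => by
    apply up_injective
    rw [up_descV ψ.symm (hpsi_symm ψ hψ), up_descV ψ hψ]
    exact ψ.toEquiv.symm_apply_apply _
  right_inv := fun v => by
    apply up_injective
    rw [up_descV ψ hψ, up_descV ψ.symm (hpsi_symm ψ hψ)]
    exact ψ.toEquiv.apply_symm_apply _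
  map_rel_iff' := by
    intro u v
    show T'.Adj (descV ψ u) (descV ψ v) ↔ T.Adj u v
    constructor
    · intro h
      have h2 := descV_adj ψ.symm (hpsi_symm ψ hψ) hT' hT h
      have hu : ∀ w, descV ψ.symm (descV ψ w) = w := fun w => by
        apply up_injective
        rw [up_descV ψ.symm (hpsi_symm ψ hψ), up_descV ψ hψ]
        exact ψ.toEquiv.symm_apply_apply _
      rwa [hu, hu] at h2
    · exact descV_adj ψ hψ hT hT'

lemma descIso_inl (ψ : subdiv T x y ≃g subdiv T' x' y')
    (hψ : ∀ i : Fin (k+4), ψ (inl i) = inl i) (hT : T.Adj x y) (hT' : T'.Adj x' y')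
    (i : Fin (k+3)) : descIso ψ hψ hT hT' (inl i) = inl i := descV_inl ψ hψ i

lemma descIso_pair (ψ : subdiv T x y ≃g subdiv T' x' y')
    (hψ : ∀ i : Fin (k+4), ψ (inl i) = inl i) (hT : T.Adj x y) (hT' : T'.Adj x' y') :
    s(descIso ψ hψ hT hT' x, descIso ψ hψ hT hT' y) = s(x', y') := descV_pair ψ hψ hT


lemma fin3_cases (i : Fin (0+3)) : i = 0 ∨ i = 1 ∨ i = 2 := by revert i; decide
lemma fin1_eq (j : Fin (0+1)) : j = 0 := by revert j; decide

def Rigid (k : ℕ) : Prop := ∀ (G : SimpleGraph (VV k)), IsTrivalentLeafTree (k+3) G →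
  ∀ (ψ : G ≃g G), (∀ i, ψ (inl i) = inl i) → ∀ v, ψ v = v

lemma rigid_zero : Rigid 0 := by
  intro G hG ψ hψ v
  rcases v with i | j
  · exact hψ i
  · rcases h : ψ (inr j) with i | j'
    · exfalso
      have h2 := ψ.toEquiv.injective (h.trans (hψ i).symm)
      simp at h2
    · rw [fin1_eq j', fin1_eq j]

lemma subdiv_auto_id {k : ℕ} (hR : Rigid k) {S : SimpleGraph (VV k)}
    (hTS : IsTrivalentLeafTree (k+3) S) {x y : VV k} (hxy : S.Adj x y)
    (ψ : subdiv S x y ≃g subdiv S x y) (hψ : ∀ i, ψ (inl i) = inl i) (p : VV (k+1)) :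
    ψ p = p := by
  have hfix : ∀ v, descV ψ v = v := hR S hTS (descIso ψ hψ hxy hxy)
    (fun i => descIso_inl ψ hψ hxy hxy i)
  rcases cases_up p with rfl | rfl | ⟨v, rfl⟩
  · exact psi_LL ψ hψ
  · exact psi_NN ψ hψ
  · rw [← up_descV ψ hψ, hfix v]

lemma rigid_succ {k : ℕ} (hR : Rigid k) : Rigid (k+1) := by
  intro G' hG' ψ hψ v
  obtain ⟨H, ρ, hρ, hH, hadj⟩ := normalizeTri hG'
  obtain ⟨a, b, hab, hset⟩ := nbr_NN_eq hH hadj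
  obtain ⟨S, hTS, hadjS, hSeq⟩ : ∃ S, IsTrivalentLeafTree (k+3) S ∧ S.Adj a b ∧
      subdiv S a b = H :=
    ⟨contract H, contract_trivalent hH hadj hab hset, contract_adj_ab hadj hab hset,
      subdiv_contract hH hadj hab hset⟩
  subst hSeq
  have hψ' : ∀ i, (ρ.symm.trans (ψ.trans ρ)) (inl i) = inl i := by
    intro i
    show ρ (ψ (ρ.symm (inl i))) = inl i
    have h1 : ρ.symm (inl i) = inl i := iso_symm_fix ρ hρ i
    rw [h1, hψ i, hρ i]
  have h := subdiv_auto_id hR hTS hadjS (ρ.symm.trans (ψ.trans ρ)) hψ' (ρ v)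
  have h2 : ρ (ψ (ρ.symm (ρ v))) = ρ v := h
  rw [show ρ.symm (ρ v) = v from ρ.toEquiv.symm_apply_apply v] at h2
  exact ρ.toEquiv.injective h2

lemma rigid_all (k : ℕ) : Rigid k := by
  induction k with
  | zero => exact rigid_zero
  | succ k ih => exact rigid_succ ih

/-! ### Base case -/

def star0 : SimpleGraph (VV 0) where
  Adj p q := (p = inr 0 ∧ q ≠ inr 0) ∨ (q = inr 0 ∧ p ≠ inr 0)
  symm := by tauto
  loopless := by constructor; rintro p (⟨rfl, h⟩ | ⟨rfl, h⟩) <;> exact h rfl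

lemma compl_inr0 : ({inr 0}ᶜ : Set (VV 0)) = {inl 0, inl 1, inl 2} := by
  ext q
  simp only [Set.mem_compl_iff, Set.mem_singleton_iff, Set.mem_insert_iff]
  constructor
  · intro h
    rcases q with i | j
    · rcases fin3_cases i with rfl | rfl | rfl <;> simp
    · exact absurd (by rw [fin1_eq j]) h
  · rintro (rfl | rfl | rfl) <;> simp

lemma star0_nbr_inr : star0.neighborSet (inr 0) = {inl 0, inl 1, inl 2} := by
  rw [← compl_inr0]
  ext q
  simp only [mem_neighborSet, Set.mem_compl_iff, Set.mem_singleton_iff]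
  constructor
  · rintro (⟨-, h⟩ | ⟨-, h⟩)
    · exact h
    · exact absurd rfl h
  · intro h
    exact Or.inl ⟨rfl, h⟩

lemma star0_nbr_inl (i : Fin (0+3)) : star0.neighborSet (inl i) = {inr 0} := by
  ext q
  simp only [mem_neighborSet, Set.mem_singleton_iff]
  constructor
  · rintro (⟨h, -⟩ | ⟨rfl, -⟩)
    · exact absurd h (by simp)
    · rfl
  · rintro rfl
    exact Or.inr ⟨rfl, by simp⟩

lemma ncard_three_inl : ({inl 0, inl 1, inl 2} : Set (VV 0)).ncard = 3 :=
  Set.ncard_eq_three.2 ⟨_, _, _, by decide, by decide, by decide, rfl⟩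

lemma star0_edgeSet :
    star0.edgeSet = {s(inr 0, inl 0), s(inr 0, inl 1), s(inr 0, inl 2)} := by
  ext e
  induction e with
  | h p q =>
    simp only [mem_edgeSet, Set.mem_insert_iff, Set.mem_singleton_iff]
    constructor
    · rintro (⟨rfl, h⟩ | ⟨rfl, h⟩)
      · rcases q with i | j
        · rcases fin3_cases i with rfl | rfl | rfl
          · exact Or.inl rfl
          · exact Or.inr (Or.inl rfl)
          · exact Or.inr (Or.inr rfl)
        · exact absurd (by rw [fin1_eq j]) h
      · rcases p with i | j
        · rcases fin3_cases i with rfl | rfl | rfl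
          · exact Or.inl Sym2.eq_swap
          · exact Or.inr (Or.inl Sym2.eq_swap)
          · exact Or.inr (Or.inr Sym2.eq_swap)
        · exact absurd (by rw [fin1_eq j]) h
    · rintro (h | h | h) <;> rw [Sym2.eq_iff] at h <;>
        rcases h with ⟨rfl, rfl⟩ | ⟨rfl, rfl⟩ <;>
        first
          | exact Or.inl ⟨rfl, by simp⟩
          | exact Or.inr ⟨rfl, by simp⟩

lemma star0_trivalent : IsTrivalentLeafTree 3 star0 := by
  have hconn : star0.Connected := by
    have hnbr : ∀ p : VV 0, star0.Reachable p (inr 0) := by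
      intro p
      by_cases h : p = inr 0
      · rw [h]
      · exact (Adj.reachable (Or.inr ⟨rfl, h⟩))
    exact Connected.mk fun p q => (hnbr p).trans (hnbr q).symm
  refine ⟨isTree_of_connected_of_ncard hconn ?_, fun i => ?_, fun j => ?_⟩
  · show star0.edgeSet.ncard + 1 = Fintype.card (VV 0)
    rw [star0_edgeSet, card_VV]
    have h3 : ({s(inr 0, inl 0), s(inr 0, inl 1), s(inr 0, inl 2)} :
        Set (Sym2 (VV 0))).ncard = 3 :=
      Set.ncard_eq_three.2 ⟨_, _, _, by decide, by decide, by decide, rfl⟩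
    omega
  · show (star0.neighborSet (inl i)).ncard = 1
    rw [star0_nbr_inl i]
    exact Set.ncard_singleton _
  · show (star0.neighborSet (inr j)).ncard = 3
    rw [fin1_eq j, star0_nbr_inr]
    exact ncard_three_inl

lemma star0_unique {G : SimpleGraph (VV 0)} (hG : IsTrivalentLeafTree 3 G) : G = star0 := by
  obtain ⟨-, hleaf, hint⟩ := hG
  have hleaf' : ∀ i : Fin (0+3), (G.neighborSet (inl i)).ncard = 1 := fun i => hleaf i
  have hint' : ∀ j : Fin (0+1), (G.neighborSet (inr j)).ncard = 3 := fun j => hint j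
  have hnbr_inr : G.neighborSet (inr 0) = {inl 0, inl 1, inl 2} := by
    rw [← compl_inr0]
    apply Set.eq_of_subset_of_ncard_le
    · intro q hq
      simp only [Set.mem_compl_iff, Set.mem_singleton_iff]
      exact fun h => G.loopless.irrefl _ (h ▸ (hq : G.Adj (inr 0) q)).symm
    · rw [compl_inr0, ncard_three_inl]
      exact le_of_eq (hint' 0).symm
    · exact Set.toFinite _
  have hnbr_inl : ∀ i : Fin (0+3), G.neighborSet (inl i) = {inr 0} := by
    intro i
    obtain ⟨w, hw⟩ := Set.ncard_eq_one.1 (hleaf' i)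
    have hmem : (inr 0 : VV 0) ∈ G.neighborSet (inl i) := by
      have h2 : (inl i : VV 0) ∈ G.neighborSet (inr 0) := by
        rw [hnbr_inr]
        rcases fin3_cases i with rfl | rfl | rfl <;> simp
      exact h2.symm
    rw [hw] at hmem ⊢
    rw [Set.mem_singleton_iff] at hmem
    rw [hmem]
  ext p q
  show G.Adj p q ↔ star0.Adj p q
  rcases p with i | j
  · have h1 : G.Adj (inl i) q ↔ q = inr 0 := by
      rw [← Set.mem_singleton_iff, ← hnbr_inl i]
      rfl
    rw [h1]
    constructor
    · rintro rfl
      exact Or.inr ⟨rfl, by simp⟩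
    · rintro (⟨h, -⟩ | ⟨rfl, -⟩)
      · exact absurd h (by simp)
      · rfl
  · rw [fin1_eq j]
    have h1 : G.Adj (inr 0) q ↔ q ∈ ({inl 0, inl 1, inl 2} : Set (VV 0)) := by
      rw [← hnbr_inr]; rfl
    rw [h1, ← compl_inr0]
    constructor
    · intro h
      exact Or.inl ⟨rfl, h⟩
    · rintro (⟨-, h⟩ | ⟨-, h⟩)
      · exact h
      · exact absurd rfl h

lemma card_Q0 : Nat.card (Quot (LeafLabelledIso 3)) = 1 := by
  rw [Nat.card_eq_one_iff_unique]
  constructor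
  · constructor
    intro q q'
    induction q using Quot.ind with
    | _ G =>
    induction q' using Quot.ind with
    | _ H =>
    have h : G = H := Subtype.ext ((star0_unique G.2).trans (star0_unique H.2).symm)
    rw [h]
  · exact ⟨Quot.mk _ ⟨star0, star0_trivalent⟩⟩

noncomputable def subdivS {k : ℕ} (T : SimpleGraph (VV k)) :
    Sym2 (VV k) → SimpleGraph (VV (k+1)) :=
  Sym2.lift ⟨fun x y => subdiv T x y, fun x y => subdiv_comm T x y⟩

lemma subdivS_pair {k : ℕ} (T : SimpleGraph (VV k)) (x y : VV k) :
    subdivS T s(x,y) = subdiv T x y := rfl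

lemma subdivS_trivalent {k : ℕ} {T : SimpleGraph (VV k)} (hT : IsTrivalentLeafTree (k+3) T)
    {e : Sym2 (VV k)} (he : e ∈ T.edgeSet) : IsTrivalentLeafTree (k+4) (subdivS T e) := by
  induction e with
  | h x y => rw [subdivS_pair]; exact subdiv_trivalent hT (T.mem_edgeSet.1 he)

noncomputable def isoOfEq {V : Type*} {A B : SimpleGraph V} (h : A = B) : A ≃g B := by
  subst h; exact Iso.refl

lemma isoOfEq_apply {V : Type*} {A B : SimpleGraph V} (h : A = B) (v : V) :
    isoOfEq h v = v := by subst h; rfl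

noncomputable def FF (k : ℕ) (p : Σ c : Quot (LeafLabelledIso (k+3)),
    ((Quot.out c).1.edgeSet : Set (Sym2 (VV k)))) : Quot (LeafLabelledIso (k+1+3)) :=
  Quot.mk _ ⟨subdivS (Quot.out p.1).1 p.2.1, subdivS_trivalent (Quot.out p.1).2 p.2.2⟩

lemma FF_surjective (k : ℕ) : Function.Surjective (FF k) := by
  intro q
  induction q using Quot.ind with
  | _ G' =>
  obtain ⟨H, ρ, hρ, hH, hadjLN⟩ := normalizeTri G'.2
  obtain ⟨a, b, hab, hset⟩ := nbr_NN_eq hH hadjLN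
  have hTc := contract_trivalent hH hadjLN hab hset
  have hcab := contract_adj_ab hadjLN hab hset
  have hsc := subdiv_contract hH hadjLN hab hset
  set c : Quot (LeafLabelledIso (k+3)) := Quot.mk _ ⟨contract H, hTc⟩ with hc
  have hrel : LeafLabelledIso (k+3) (Quot.out c) ⟨contract H, hTc⟩ := by
    have h := Quot.out_eq c
    rw [hc] at h
    exact (leafIso_equivalence.eqvGen_iff).1 (Quot.eq.1 h)
  obtain ⟨ξ, hξ⟩ := hrel
  have hxa : ξ (ξ.symm a) = a := ξ.toEquiv.apply_symm_apply a
  have hxb : ξ (ξ.symm b) = b := ξ.toEquiv.apply_symm_apply b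
  have he₀ : (Quot.out c).1.Adj (ξ.symm a) (ξ.symm b) := by
    rw [← ξ.map_adj_iff, hxa, hxb]
    exact hcab
  refine ⟨⟨c, ⟨s(ξ.symm a, ξ.symm b), he₀⟩⟩, ?_⟩
  apply Quot.sound
  have h1 : subdivS (Quot.out c).1 s(ξ.symm a, ξ.symm b)
      = subdiv (Quot.out c).1 (ξ.symm a) (ξ.symm b) := subdivS_pair _ _ _
  have h2 : subdiv (contract H) (ξ (ξ.symm a)) (ξ (ξ.symm b)) = G'.1 → False ∨ True := fun _ => Or.inr trivial
  have h3 : subdiv (contract H) (ξ (ξ.symm a)) (ξ (ξ.symm b)) = H := by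
    rw [hxa, hxb]; exact hsc
  refine ⟨(((isoOfEq h1).trans (subdivIso ξ (ξ.symm a) (ξ.symm b))).trans
    (isoOfEq h3)).trans ρ.symm, ?_⟩
  intro i
  show ρ.symm ((isoOfEq h3) ((subdivIso ξ (ξ.symm a) (ξ.symm b)) ((isoOfEq h1) (inl i)))) = inl i
  rw [isoOfEq_apply h1, subdivIso_inl ξ hξ, isoOfEq_apply h3]
  exact iso_symm_fix ρ hρ i

lemma FF_injective (k : ℕ) (hR : Rigid k) : Function.Injective (FF k) := by
  rintro ⟨c, e, he⟩ ⟨c', e', he'⟩ h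
  revert h
  revert he
  induction e using Sym2.ind with
  | _ x y =>
  intro he
  revert he'
  induction e' using Sym2.ind with
  | _ x' y' =>
  intro he' h
  have hxy : (Quot.out c).1.Adj x y := (Quot.out c).1.mem_edgeSet.1 he
  have hxy' : (Quot.out c').1.Adj x' y' := (Quot.out c').1.mem_edgeSet.1 he'
  have h2 : LeafLabelledIso (k+1+3)
      ⟨subdiv (Quot.out c).1 x y, subdiv_trivalent (Quot.out c).2 hxy⟩
      ⟨subdiv (Quot.out c').1 x' y', subdiv_trivalent (Quot.out c').2 hxy'⟩ := by
    apply (leafIso_equivalence.eqvGen_iff).1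
    apply Quot.eq.1
    have ha : (⟨subdivS (Quot.out c).1 s(x,y), subdivS_trivalent (Quot.out c).2 he⟩ :
        {G : SimpleGraph (Fin (k+1+3) ⊕ Fin (k+1+3-2)) // IsTrivalentLeafTree (k+1+3) G})
        = ⟨subdiv (Quot.out c).1 x y, subdiv_trivalent (Quot.out c).2 hxy⟩ :=
      Subtype.ext (subdivS_pair _ _ _)
    have hb : (⟨subdivS (Quot.out c').1 s(x',y'), subdivS_trivalent (Quot.out c').2 he'⟩ :
        {G : SimpleGraph (Fin (k+1+3) ⊕ Fin (k+1+3-2)) // IsTrivalentLeafTree (k+1+3) G})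
        = ⟨subdiv (Quot.out c').1 x' y', subdiv_trivalent (Quot.out c').2 hxy'⟩ :=
      Subtype.ext (subdivS_pair _ _ _)
    rw [← ha, ← hb]
    exact h
  obtain ⟨ψ, hψ⟩ := h2
  have hcc : c = c' := by
    have hq : Quot.mk (LeafLabelledIso (k+3)) (Quot.out c)
        = Quot.mk (LeafLabelledIso (k+3)) (Quot.out c') :=
      Quot.sound ⟨descIso ψ hψ hxy hxy', fun i => descIso_inl ψ hψ hxy hxy' i⟩
    rw [Quot.out_eq, Quot.out_eq] at hq
    exact hq
  subst hcc
  have hfix : ∀ v, descIso ψ hψ hxy hxy' v = v :=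
    hR _ (Quot.out c).2 (descIso ψ hψ hxy hxy') (fun i => descIso_inl ψ hψ hxy hxy' i)
  have hpair : s(x, y) = s(x', y') := by
    have h3 := descIso_pair ψ hψ hxy hxy'
    rwa [hfix x, hfix y] at h3
  have he2 : (⟨s(x,y), he⟩ : ((Quot.out c).1.edgeSet : Set (Sym2 (VV k))))
      = ⟨s(x',y'), he'⟩ := Subtype.ext hpair
  rw [he2]

lemma card_step (k : ℕ) : Nat.card (Quot (LeafLabelledIso (k+1+3)))
    = (2*k+3) * Nat.card (Quot (LeafLabelledIso (k+3))) := by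
  classical
  have hbij : Function.Bijective (FF k) := ⟨FF_injective k (rigid_all k), FF_surjective k⟩
  rw [← Nat.card_eq_of_bijective (FF k) hbij]
  have hc : ∀ c : Quot (LeafLabelledIso (k+3)),
      Nat.card ((Quot.out c).1.edgeSet : Set (Sym2 (VV k))) = 2*k+3 := by
    intro c
    rw [Nat.card_coe_set_eq]
    have h2 : (Quot.out c).1.edgeSet.ncard + 1 = Fintype.card (VV k) :=
      tree_ncard_edge (Quot.out c).2.1
    rw [card_VV] at h2
    omega
  letI : Fintype (Quot (LeafLabelledIso (k+3))) := Fintype.ofFinite _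
  letI : ∀ c : Quot (LeafLabelledIso (k+3)),
      Fintype ((Quot.out c).1.edgeSet : Set (Sym2 (VV k))) := fun c => Fintype.ofFinite _
  rw [Nat.card_eq_fintype_card, Fintype.card_sigma]
  have hsum : ∀ c : Quot (LeafLabelledIso (k+3)),
      Fintype.card ((Quot.out c).1.edgeSet : Set (Sym2 (VV k))) = 2*k+3 := by
    intro c
    rw [← Nat.card_eq_fintype_card]
    exact hc c
  rw [Finset.sum_congr rfl (fun c _ => hsum c), Finset.sum_const, Finset.card_univ,
    smul_eq_mul, Nat.card_eq_fintype_card]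
  ring

lemma card_Qk (k : ℕ) : Nat.card (Quot (LeafLabelledIso (k+3)))
    = Nat.doubleFactorial (2*k+1) := by
  induction k with
  | zero =>
    show Nat.card (Quot (LeafLabelledIso 3)) = _
    rw [card_Q0]
    decide
  | succ k ih =>
    rw [card_step k, ih]
    have h : 2*(k+1)+1 = (2*k+1)+2 := by ring
    rw [h, Nat.doubleFactorial_add_two]

/-- The number of combinatorially distinct trivalent trees with `m ≥ 3` labelled
external legs equals the double factorial `(2m - 5)!!`. -/
theorem card_trivalent_trees (m : ℕ) (hm : 3 ≤ m) :
    Nat.card (Quot (LeafLabelledIso m)) = Nat.doubleFactorial (2 * m - 5) := by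
  obtain ⟨k, rfl⟩ : ∃ k, m = k + 3 := ⟨m - 3, by omega⟩
  have h2 : 2*(k+3)-5 = 2*k+1 := by omega
  rw [h2]
  exact card_Qk k
end Normalize
end

section
/- Let G(ζ) be the genus-one string Green function with modulus τ = τ₁ + iτ₂. Along the family τ_{α'} = τ₁ + iT/α' and ζ_{α'} = x + iX/α' with 0 < X < T, one has lim_{α'→0} α' G(ζ_{α'}) = π(−X + X²/T), where G(ζ) = (π (Im ζ)²)/Im τ − (1/2) ln|sin(πζ)/π|² − 2 Σ_{m≥1} [ (q^m/(1−q^m)) sin²(mπζ)/m + c.c. ] and q = e^{2πiτ}. -/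
open Filter

lemma aux_abs_sin_le (z : ℂ) (hz : 0 ≤ z.im) : ‖Complex.sin z‖ ≤ Real.exp z.im := by
  rw [Complex.sin, norm_div, norm_mul, Complex.norm_I, mul_one, Complex.norm_two]
  have h1 : ‖Complex.exp (-z*Complex.I)‖ = Real.exp z.im := by
    rw [Complex.norm_exp]; congr 1; simp
  have h2 : ‖Complex.exp (z*Complex.I)‖ = Real.exp (-z.im) := by
    rw [Complex.norm_exp]; congr 1; simp
  have := norm_sub_le (Complex.exp (-z*Complex.I)) (Complex.exp (z*Complex.I))
  rw [h1, h2] at this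
  have h3 : Real.exp (-z.im) ≤ Real.exp z.im := Real.exp_le_exp.2 (by linarith)
  nlinarith [this]

lemma aux_le_abs_sin (z : ℂ) : (Real.exp z.im - Real.exp (-z.im))/2 ≤ ‖Complex.sin z‖ := by
  rw [Complex.sin, norm_div, norm_mul, Complex.norm_I, mul_one, Complex.norm_two]
  have h1 : ‖Complex.exp (-z*Complex.I)‖ = Real.exp z.im := by
    rw [Complex.norm_exp]; congr 1; simp
  have h2 : ‖Complex.exp (z*Complex.I)‖ = Real.exp (-z.im) := by
    rw [Complex.norm_exp]; congr 1; simp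
  have := norm_sub_norm_le (Complex.exp (-z*Complex.I)) (Complex.exp (z*Complex.I))
  rw [h1, h2] at this
  linarith

lemma aux_tendsto_div_atTop (c : ℝ) (hc : 0 < c) :
    Tendsto (fun a : ℝ => c / a) (nhdsWithin 0 (Set.Ioi 0)) atTop := by
  simp only [div_eq_mul_inv]
  exact tendsto_inv_nhdsGT_zero.const_mul_atTop hc

lemma aux_tendsto_exp_neg_div (c : ℝ) (hc : 0 < c) :
    Tendsto (fun a : ℝ => Real.exp (-(c / a))) (nhdsWithin 0 (Set.Ioi 0)) (nhds 0) :=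
  Real.tendsto_exp_neg_atTop_nhds_zero.comp (aux_tendsto_div_atTop c hc)

lemma aux_tendsto_mul_const (c : ℝ) :
    Tendsto (fun a : ℝ => a * c) (nhdsWithin 0 (Set.Ioi 0)) (nhds 0) := by
  simpa using (tendsto_id.mono_left nhdsWithin_le_nhds).mul_const (b := c)
    (a := (0:ℝ)) (f := fun a : ℝ => a) (x := nhdsWithin (0:ℝ) (Set.Ioi 0))


/-- The genus-one string Green function, with modulus `τ` and point `ζ`:
`G(ζ) = π (Im ζ)²/Im τ - (1/2) ln|sin(πζ)/π|² - 2 Σ_{m≥1} [q^m/(1-q^m) sin²(mπζ)/m + c.c.]`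
where `q = e^{2πiτ}` and the `+ c.c.` makes each summand twice the real part. -/
noncomputable def genusOneGreen (τ ζ : ℂ) : ℝ :=
  Real.pi * (ζ.im) ^ 2 / τ.im
    - (1 / 2) * Real.log ((‖Complex.sin ((Real.pi : ℂ) * ζ) / (Real.pi : ℂ)‖) ^ 2)
    - 2 * ∑' m : ℕ+, (1 / (m : ℝ)) *
        (2 * ((Complex.exp (2 * (Real.pi : ℂ) * Complex.I * τ) ^ (m : ℕ) /
              (1 - Complex.exp (2 * (Real.pi : ℂ) * Complex.I * τ) ^ (m : ℕ)) *
            Complex.sin ((m : ℂ) * (Real.pi : ℂ) * ζ) ^ 2).re))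

/-- Tropical limit of the genus-one string Green function: along the family
`τ_{α'} = τ₁ + i T/α'`, `ζ_{α'} = x + i X/α'` with `0 < X < T`, one has
`lim_{α'→0⁺} α' G(ζ_{α'}) = π(-X + X²/T)`. -/
theorem tropical_limit_genus_one_green_function (T X x τ₁ : ℝ)
    (hT : 0 < T) (hX : 0 < X) (hXT : X < T) :
    Tendsto (fun a : ℝ =>
        a * genusOneGreen ((τ₁ : ℂ) + ((T / a : ℝ) : ℂ) * Complex.I)
              ((x : ℂ) + ((X / a : ℝ) : ℂ) * Complex.I))
      (nhdsWithin 0 (Set.Ioi 0))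
      (nhds (Real.pi * (-X + X ^ 2 / T))) := by
  have hπ := Real.pi_pos
  set l := nhdsWithin (0:ℝ) (Set.Ioi 0) with hl
  -- notation
  set ζ : ℝ → ℂ := fun a => (x : ℂ) + ((X / a : ℝ) : ℂ) * Complex.I with hζdef
  set τf : ℝ → ℂ := fun a => (τ₁ : ℂ) + ((T / a : ℝ) : ℂ) * Complex.I with hτdef
  have hζim : ∀ a, (ζ a).im = X / a := fun a => by simp [hζdef]
  have hτim : ∀ a, (τf a).im = T / a := fun a => by simp [hτdef]
  -- eventual facts
  have hmem : ∀ᶠ a in l, a ∈ Set.Ioi (0:ℝ) := self_mem_nhdsWithin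
  have hevq : ∀ᶠ a in l, Real.exp (-(2*Real.pi*T/a)) ≤ 1/2 :=
    (aux_tendsto_exp_neg_div (2*Real.pi*T) (by positivity)).eventually
      (eventually_le_nhds (by norm_num))
  have hevr : ∀ᶠ a in l, Real.exp (-(2*Real.pi*(T-X)/a)) ≤ 1/2 :=
    (aux_tendsto_exp_neg_div (2*Real.pi*(T-X)) (mul_pos (by positivity) (sub_pos.2 hXT))).eventually
      (eventually_le_nhds (by norm_num))
  have hevt : ∀ᶠ a in l, 1 ≤ Real.pi*X/a :=
    (aux_tendsto_div_atTop (Real.pi*X) (by positivity)).eventually_ge_atTop 1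
  -- Piece 1
  have h1 : Tendsto (fun a : ℝ => a * (Real.pi * ((ζ a).im) ^ 2 / (τf a).im)) l
      (nhds (Real.pi * X^2 / T)) := by
    apply tendsto_const_nhds.congr'
    filter_upwards [hmem] with a ha
    have ha0 : a ≠ 0 := ne_of_gt ha
    rw [hζim, hτim]
    field_simp
  -- Piece 2
  have h2 : Tendsto (fun a : ℝ => a * ((1 / 2) *
      Real.log ((‖Complex.sin ((Real.pi : ℂ) * ζ a) / (Real.pi : ℂ)‖) ^ 2))) l
      (nhds (Real.pi * X)) := by
    set s : ℝ → ℝ := fun a => ‖Complex.sin ((Real.pi : ℂ) * ζ a)‖ with hsdef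
    have hsim : ∀ a, ((Real.pi : ℂ) * ζ a).im = Real.pi * (X / a) := fun a => by
      simp [hζdef]
    have hs_up : ∀ a, 0 < a → s a ≤ Real.exp (Real.pi * (X / a)) := by
      intro a ha
      have := aux_abs_sin_le ((Real.pi : ℂ) * ζ a) (by rw [hsim]; positivity)
      rwa [hsim] at this
    have hs_lo : ∀ a, (Real.exp (Real.pi * (X / a)) - Real.exp (-(Real.pi * (X / a))))/2 ≤ s a := by
      intro a
      have := aux_le_abs_sin ((Real.pi : ℂ) * ζ a)
      rwa [hsim] at this
    -- positivity of s on the good set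
    have hs4 : ∀ a, 0 < a → 1 ≤ Real.pi*X/a → Real.exp (Real.pi * (X/a)) / 4 ≤ s a := by
      intro a ha ht
      have ht' : 1 ≤ Real.pi * (X/a) := by rw [mul_div_assoc] at ht; exact ht
      have e1 : Real.exp (-(Real.pi * (X/a))) ≤ Real.exp (-1) := Real.exp_le_exp.2 (by linarith)
      have e2 : Real.exp (-1) ≤ 1/2 := by
        rw [Real.exp_neg]
        have : (2:ℝ) ≤ Real.exp 1 := by
          have := Real.add_one_le_exp (1:ℝ); linarith
        rw [inv_le_comm₀ (by positivity) (by norm_num)]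
        norm_num; linarith
      have e3 : (1:ℝ) ≤ Real.exp (Real.pi * (X/a)) := Real.one_le_exp (by linarith)
      have := hs_lo a
      linarith
    have hspos : ∀ a, 0 < a → 1 ≤ Real.pi*X/a → 0 < s a := by
      intro a ha ht
      exact lt_of_lt_of_le (by positivity) (hs4 a ha ht)
    -- a * log (s a) → π X
    have hL : Tendsto (fun a : ℝ => a * Real.log (s a)) l (nhds (Real.pi * X)) := by
      apply tendsto_of_tendsto_of_tendsto_of_le_of_le'
        (g := fun a : ℝ => Real.pi * X - a * Real.log 4) (h := fun _ : ℝ => Real.pi * X)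
      · have := tendsto_const_nhds (x := Real.pi * X) (f := l) |>.sub (aux_tendsto_mul_const (Real.log 4))
        simpa using this
      · exact tendsto_const_nhds
      · filter_upwards [hmem, hevt] with a ha ht
        have ha0 : (a:ℝ) ≠ 0 := ne_of_gt ha
        have hlog : Real.pi * (X/a) - Real.log 4 ≤ Real.log (s a) := by
          have h := Real.log_le_log (by positivity) (hs4 a ha ht)
          rwa [Real.log_div (Real.exp_ne_zero _) (by norm_num), Real.log_exp] at h
        have hmul : a * (Real.pi * (X/a) - Real.log 4) ≤ a * Real.log (s a) :=
          mul_le_mul_of_nonneg_left hlog (le_of_lt ha)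
        have hat : a * (Real.pi * (X/a)) = Real.pi * X := by field_simp
        nlinarith [hmul]
      · filter_upwards [hmem, hevt] with a ha ht
        have ha0 : (a:ℝ) ≠ 0 := ne_of_gt ha
        have hlog : Real.log (s a) ≤ Real.pi * (X/a) := by
          rw [Real.log_le_iff_le_exp (hspos a ha ht)]
          exact hs_up a ha
        have := mul_le_mul_of_nonneg_left hlog (le_of_lt ha)
        have hat : a * (Real.pi * (X/a)) = Real.pi * X := by field_simp
        linarith
    -- rewrite the log term
    have heq : (fun a : ℝ => a * Real.log (s a) - a * Real.log Real.pi) =ᶠ[l]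
        (fun a : ℝ => a * ((1 / 2) *
          Real.log ((‖Complex.sin ((Real.pi : ℂ) * ζ a) / (Real.pi : ℂ)‖) ^ 2))) := by
      filter_upwards [hmem, hevt] with a ha ht
      have hsp := hspos a ha ht
      have habs : ‖Complex.sin ((Real.pi : ℂ) * ζ a) / (Real.pi : ℂ)‖ = s a / Real.pi := by
        rw [norm_div, Complex.norm_real, Real.norm_of_nonneg hπ.le]
      rw [habs, Real.log_pow, Real.log_div (ne_of_gt hsp) (ne_of_gt hπ)]
      push_cast
      ring
    have := (hL.sub (aux_tendsto_mul_const (Real.log Real.pi))).congr' heq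
    simpa using this
  -- Piece 3
  have h3 : Tendsto (fun a : ℝ => a * (2 * ∑' m : ℕ+, (1 / (m : ℝ)) *
      (2 * ((Complex.exp (2 * (Real.pi : ℂ) * Complex.I * τf a) ^ (m : ℕ) /
            (1 - Complex.exp (2 * (Real.pi : ℂ) * Complex.I * τf a) ^ (m : ℕ)) *
          Complex.sin ((m : ℂ) * (Real.pi : ℂ) * ζ a) ^ 2).re)))) l (nhds 0) := by
    refine squeeze_zero_norm' ?_
      (show Tendsto (fun b : ℝ => b * 16) l (nhds 0) by simpa using aux_tendsto_mul_const (16:ℝ))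
    · filter_upwards [hmem, hevq, hevr] with a ha hqa hra
      have ha0 : (a:ℝ) ≠ 0 := ne_of_gt ha
      set q : ℂ := Complex.exp (2 * (Real.pi : ℂ) * Complex.I * τf a) with hqdef
      set r : ℝ := Real.exp (-(2*Real.pi*(T-X)/a)) with hrdef
      have hr0 : 0 ≤ r := Real.exp_nonneg _
      have hr1 : r < 1 := lt_of_le_of_lt hra (by norm_num)
      have habsq : ‖q‖ = Real.exp (-(2*Real.pi*T/a)) := by
        rw [hqdef, Complex.norm_exp]; congr 1
        simp [hτdef, Complex.mul_re, Complex.mul_im]; ring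
      set f : ℕ+ → ℝ := fun m => (1 / (m : ℝ)) *
        (2 * ((q ^ (m : ℕ) / (1 - q ^ (m : ℕ)) *
          Complex.sin ((m : ℂ) * (Real.pi : ℂ) * ζ a) ^ 2).re)) with hfdef
      have hbound : ∀ m : ℕ+, |f m| ≤ 4 * r ^ (m:ℕ) := by
        intro m
        have hm1 : (1:ℝ) ≤ (m:ℝ) := by exact_mod_cast m.one_le
        have hmpos : (0:ℝ) < (m:ℝ) := by exact_mod_cast m.pos
        have habsqm : ‖q ^ (m:ℕ)‖ = (Real.exp (-(2*Real.pi*T/a))) ^ (m:ℕ) := by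
          rw [norm_pow, habsq]
        have hqm_le : ‖q ^ (m:ℕ)‖ ≤ 1/2 := by
          rw [habsqm]
          calc (Real.exp (-(2*Real.pi*T/a))) ^ (m:ℕ) ≤ Real.exp (-(2*Real.pi*T/a)) :=
                pow_le_of_le_one (Real.exp_nonneg _) (le_trans hqa (by norm_num)) m.pos.ne'
            _ ≤ 1/2 := hqa
        have hden : (1:ℝ)/2 ≤ ‖1 - q ^ (m:ℕ)‖ := by
          have h := norm_sub_norm_le 1 (q ^ (m:ℕ))
          rw [norm_one] at h
          linarith
        have hsinim : (((m : ℂ) * (Real.pi : ℂ) * ζ a)).im = (m:ℕ) * (Real.pi * (X/a)) := by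
          simp [hζdef, Complex.mul_im]; ring
        have hsin : ‖Complex.sin ((m : ℂ) * (Real.pi : ℂ) * ζ a)‖
            ≤ Real.exp ((m:ℕ) * (Real.pi * (X/a))) := by
          have := aux_abs_sin_le ((m : ℂ) * (Real.pi : ℂ) * ζ a)
            (by rw [hsinim]
                exact mul_nonneg (Nat.cast_nonneg _)
                  (mul_nonneg Real.pi_pos.le (le_of_lt (div_pos hX ha))))
          rwa [hsinim] at this
        have hw : ‖q ^ (m:ℕ) / (1 - q ^ (m:ℕ)) *
            Complex.sin ((m : ℂ) * (Real.pi : ℂ) * ζ a) ^ 2‖ ≤ 2 * r ^ (m:ℕ) := by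
          rw [norm_mul, norm_div, norm_pow, norm_pow, habsq]
          have hdenpos : (0:ℝ) < ‖1 - q ^ (m:ℕ)‖ := lt_of_lt_of_le (by norm_num) hden
          have hA : (Real.exp (-(2*Real.pi*T/a))) ^ (m:ℕ) / ‖1 - q ^ (m:ℕ)‖
              ≤ 2 * (Real.exp (-(2*Real.pi*T/a))) ^ (m:ℕ) := by
            rw [div_le_iff₀ hdenpos]
            nlinarith [pow_nonneg (Real.exp_nonneg (-(2*Real.pi*T/a))) (m:ℕ)]
          have hS : (‖Complex.sin ((m : ℂ) * (Real.pi : ℂ) * ζ a)‖) ^ 2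
              ≤ (Real.exp ((m:ℕ) * (Real.pi * (X/a)))) ^ 2 :=
            pow_le_pow_left₀ (norm_nonneg _) hsin 2
          have hkey : (Real.exp (-(2*Real.pi*T/a))) ^ (m:ℕ) * (Real.exp ((m:ℕ) * (Real.pi * (X/a)))) ^ 2
              = r ^ (m:ℕ) := by
            rw [hrdef, ← Real.exp_nat_mul, ← Real.exp_nat_mul, ← Real.exp_nat_mul, ← Real.exp_add]
            congr 1
            push_cast
            field_simp
            ring
          calc (Real.exp (-(2*Real.pi*T/a))) ^ (m:ℕ) / ‖1 - q ^ (m:ℕ)‖ *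
              (‖Complex.sin ((m : ℂ) * (Real.pi : ℂ) * ζ a)‖) ^ 2
              ≤ 2 * (Real.exp (-(2*Real.pi*T/a))) ^ (m:ℕ) * (Real.exp ((m:ℕ) * (Real.pi * (X/a)))) ^ 2 := by
                apply mul_le_mul hA hS (by positivity) (by positivity)
            _ = 2 * ((Real.exp (-(2*Real.pi*T/a))) ^ (m:ℕ) * (Real.exp ((m:ℕ) * (Real.pi * (X/a)))) ^ 2) := by
                ring
            _ = 2 * r ^ (m:ℕ) := by rw [hkey]
        have hre : |(q ^ (m:ℕ) / (1 - q ^ (m:ℕ)) *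
            Complex.sin ((m : ℂ) * (Real.pi : ℂ) * ζ a) ^ 2).re| ≤ 2 * r ^ (m:ℕ) :=
          le_trans (Complex.abs_re_le_norm _) hw
        have h1m : 1/(m:ℝ) ≤ 1 := by
          rw [div_le_one hmpos]; exact hm1
        calc |f m| = (1/(m:ℝ)) * (2 * |(q ^ (m:ℕ) / (1 - q ^ (m:ℕ)) *
              Complex.sin ((m : ℂ) * (Real.pi : ℂ) * ζ a) ^ 2).re|) := by
              rw [hfdef]; rw [abs_mul, abs_mul]
              rw [abs_of_pos (by positivity : (0:ℝ) < 1/(m:ℝ))]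
              norm_num
          _ ≤ 1 * (2 * (2 * r ^ (m:ℕ))) := by
              apply mul_le_mul h1m (by linarith) (by positivity) (by norm_num)
          _ = 4 * r ^ (m:ℕ) := by ring
      have hN : Summable (fun n : ℕ => 4*r^n) := (summable_geometric_of_lt_one hr0 hr1).mul_left 4
      have hP : Summable (fun m : ℕ+ => 4*r^(m:ℕ)) :=
        hN.comp_injective (fun a b h => by simpa using h)
      have hfabs : Summable (fun m : ℕ+ => |f m|) :=
        Summable.of_nonneg_of_le (fun m => abs_nonneg _) hbound hP
      have hf : Summable f := hfabs.of_abs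
      have hS8 : |∑' m : ℕ+, f m| ≤ 8 := by
        have t1 : |∑' m : ℕ+, f m| ≤ ∑' m : ℕ+, |f m| := by
          have h' : Summable fun m : ℕ+ => ‖f m‖ := by simpa [Real.norm_eq_abs] using hfabs
          have := norm_tsum_le_tsum_norm (f := f) h'
          simpa [Real.norm_eq_abs] using this
        have t2 : (∑' m : ℕ+, |f m|) ≤ ∑' m : ℕ+, 4*r^(m:ℕ) := Summable.tsum_le_tsum hbound hfabs hP
        have t3 : (∑' m : ℕ+, 4*r^(m:ℕ)) ≤ ∑' n : ℕ, 4*r^n :=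
          Summable.tsum_le_tsum_of_inj (fun m : ℕ+ => (m:ℕ)) (fun a b h => by simpa using h)
            (fun c _ => by positivity) (fun b => le_rfl) hP hN
        have t4 : (∑' n : ℕ, 4*r^n) = 4*(1-r)⁻¹ := by
          rw [tsum_mul_left, tsum_geometric_of_lt_one hr0 hr1]
        have t5 : (1-r)⁻¹ ≤ 2 := by
          have h12 : (1:ℝ)/2 ≤ 1 - r := by linarith
          calc (1-r)⁻¹ ≤ ((1:ℝ)/2)⁻¹ := by
                apply inv_anti₀ (by norm_num) h12
            _ = 2 := by norm_num
        linarith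
      rw [Real.norm_eq_abs, abs_mul, abs_mul, abs_of_pos ha]
      have h2' : |(2:ℝ)| = 2 := by norm_num
      rw [h2']
      nlinarith [hS8, (le_of_lt ha : (0:ℝ) ≤ a), abs_nonneg (∑' m : ℕ+, f m)]
  -- combine
  have hfinal := (h1.sub h2).sub h3
  have hlim : Real.pi * (-X + X ^ 2 / T) = Real.pi * X^2/T - Real.pi * X - 0 := by ring
  rw [hlim]
  exact hfinal.congr (fun a => by simp only [genusOneGreen]; ring)
end
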